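/- Let m₁, m₂, m₃ > 0 with m₁+m₂+m₃ = 1 and let x > 0 satisfy p(x) = 0, where p is the Euler quintic polynomial. Then the mass parameter β = (m₁(3x²+3x+1) + m₃x²(x²+3x+3)) / (x² + m₂((x+1)²(x²+1) − x²)) satisfies 0 ≤ β ≤ 7. -/
import Mathlib

/-- The mass parameter `β` of the Euler central configuration lies in `[0, 7]`. -/
theorem euler_beta_range (m1 m2 m3 x : ℝ)
    (hm1 : 0 < m1) (hm2 : 0 < m2) (hm3 : 0 < m3)
    (hsum : m1 + m2 + m3 = 1) (hx : 0 < x)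
    (hp : (m3 + m2) * x ^ 5 + (3 * m3 + 2 * m2) * x ^ 4 + (3 * m3 + m2) * x ^ 3
        - (3 * m1 + m2) * x ^ 2 - (3 * m1 + 2 * m2) * x - (m1 + m2) = 0) :
    0 ≤ (m1 * (3 * x ^ 2 + 3 * x + 1) + m3 * x ^ 2 * (x ^ 2 + 3 * x + 3))
        / (x ^ 2 + m2 * ((x + 1) ^ 2 * (x ^ 2 + 1) - x ^ 2)) ∧
    (m1 * (3 * x ^ 2 + 3 * x + 1) + m3 * x ^ 2 * (x ^ 2 + 3 * x + 3))
        / (x ^ 2 + m2 * ((x + 1) ^ 2 * (x ^ 2 + 1) - x ^ 2)) ≤ 7 := by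
  set N : ℝ := m1 * (3 * x ^ 2 + 3 * x + 1) + m3 * x ^ 2 * (x ^ 2 + 3 * x + 3) with hN
  set D : ℝ := x ^ 2 + m2 * ((x + 1) ^ 2 * (x ^ 2 + 1) - x ^ 2) with hD
  have hE : (0:ℝ) < x ^ 4 + 2 * x ^ 3 + x ^ 2 + 2 * x + 1 := by positivity
  have hDpos : 0 < D := by
    have : (x + 1) ^ 2 * (x ^ 2 + 1) - x ^ 2 = x ^ 4 + 2 * x ^ 3 + x ^ 2 + 2 * x + 1 := by ring
    rw [hD, this]; positivity
  have hNpos : 0 ≤ N := by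
    rw [hN]; positivity
  have key : (x ^ 4 + 2 * x ^ 3 + x ^ 2 + 2 * x + 1) * x * (7 * D - N)
      = 2 * x ^ 3 * (x - 1) ^ 2 * (2 * x + 1) * (x + 2)
        + 8 * m2 * x * (x ^ 4 + 2 * x ^ 3 + x ^ 2 + 2 * x + 1) ^ 2 := by
    rw [hN, hD]
    linear_combination (-x^4 - 2*x^3 + 2*x^2 + x) * hp
      + (-3*x^7 - 12*x^6 - 19*x^5 - 12*x^4 - 3*x^3) * hsum
  have hle : N ≤ 7 * D := by
    have hrhs : (0:ℝ) ≤ 2 * x ^ 3 * (x - 1) ^ 2 * (2 * x + 1) * (x + 2)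
        + 8 * m2 * x * (x ^ 4 + 2 * x ^ 3 + x ^ 2 + 2 * x + 1) ^ 2 := by positivity
    nlinarith [key, hrhs, mul_pos hE hx]
  constructor
  · exact div_nonneg hNpos hDpos.le
  · rw [div_le_iff₀ hDpos]; linarith
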